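/- Let S be a path connected metric space containing a proper closed strongly convex subspace T with at least two points. Then S contains a cut point; specifically, if s ∈ S \ T, t ∈ T, and p : [0, ℓ] → S is a simple (injective) path from s to t, then p(t₁), where t₁ = min{a ∈ [0, ℓ] : p(a) ∈ T}, is a cut point of S. -/

import Mathlib

set_option linter.unusedSectionVars false
set_option linter.unusedVariables false
set_option maxHeartbeats 1000000

open Set Metric

namespace CutPointProofAux

variable {X : Type*} [MetricSpace X]

/-- A "good interval" for the collapsing argument: a nondegenerate
ord-connected subset of `[0,1]` on which `F` takes equal values at inf and sup. -/
def GoodInt (F : ℝ → X) (J : Set ℝ) : Prop :=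
  J ⊆ Icc (0:ℝ) 1 ∧ J.OrdConnected ∧ (∃ a ∈ J, ∃ b ∈ J, a ≠ b) ∧ F (sInf J) = F (sSup J)

/-- A valid family of collapse intervals. -/
def IsFam (F : ℝ → X) (M : Set (Set ℝ)) : Prop :=
  (∀ J ∈ M, GoodInt F J) ∧ ∀ J ∈ M, ∀ K ∈ M, J ≠ K → J ∩ K = ∅

def Refines (M N : Set (Set ℝ)) : Prop := ∀ J ∈ M, ∃ K ∈ N, J ⊆ K

theorem GoodInt.nonempty {F : ℝ → X} {J : Set ℝ} (h : GoodInt F J) : J.Nonempty := by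
  obtain ⟨a, ha, -⟩ := h.2.2.1; exact ⟨a, ha⟩

theorem GoodInt.bddBelow {F : ℝ → X} {J : Set ℝ} (h : GoodInt F J) : BddBelow J :=
  BddBelow.mono h.1 bddBelow_Icc

theorem GoodInt.bddAbove {F : ℝ → X} {J : Set ℝ} (h : GoodInt F J) : BddAbove J :=
  BddAbove.mono h.1 bddAbove_Icc

theorem IsFam.mem_unique {F : ℝ → X} {M : Set (Set ℝ)} (hM : IsFam F M)
    {J K : Set ℝ} (hJ : J ∈ M) (hK : K ∈ M) {u : ℝ} (huJ : u ∈ J) (huK : u ∈ K) : J = K := by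
  by_contra hne
  have h2 := hM.2 J hJ K hK hne
  have : u ∈ J ∩ K := ⟨huJ, huK⟩
  rw [h2] at this
  exact this

theorem refines_subset {F : ℝ → X} {M N : Set (Set ℝ)} (hM : IsFam F M) (hN : IsFam F N)
    (h1 : Refines M N) (h2 : Refines N M) : M ⊆ N := by
  intro J hJ
  obtain ⟨K, hK, hJK⟩ := h1 J hJ
  obtain ⟨J', hJ', hKJ'⟩ := h2 K hK
  obtain ⟨u, hu⟩ := (hM.1 J hJ).nonempty
  have hJJ' : J = J' := hM.mem_unique hJ hJ' hu (hKJ' (hJK hu))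
  have : J = K := le_antisymm hJK (hJJ' ▸ hKJ')
  exact this ▸ hK

theorem refines_antisymm {F : ℝ → X} {M N : Set (Set ℝ)} (hM : IsFam F M) (hN : IsFam F N)
    (h1 : Refines M N) (h2 : Refines N M) : M = N :=
  le_antisymm (refines_subset hM hN h1 h2) (refines_subset hN hM h2 h1)

theorem eq_of_forall_dist_le' {x y : X} (h : ∀ ε > 0, dist x y ≤ 2 * ε) : x = y := by
  by_contra hne
  have hd : 0 < dist x y := dist_pos.2 hne
  have := h (dist x y / 4) (by linarith)
  linarith

-- Chain upper bound for Zorn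
theorem chain_bound (F : ℝ → X) (hF : UniformContinuous F) (c : Set {M : Set (Set ℝ) // IsFam F M})
    (hc : IsChain (fun A B => Refines A.1 B.1) c) :
    ∃ ub : {M : Set (Set ℝ) // IsFam F M}, ∀ A ∈ c, Refines A.1 ub.1 := by
  classical
  set S : Set (Set ℝ) := {J | ∃ A ∈ c, J ∈ A.1} with hS
  have hgood : ∀ J ∈ S, GoodInt F J := by
    rintro J ⟨A, hA, hJ⟩
    exact A.2.1 J hJ
  have hchainsub : ∀ J₁ ∈ S, ∀ J₂ ∈ S, ∀ u : ℝ, u ∈ J₁ → u ∈ J₂ → J₁ ⊆ J₂ ∨ J₂ ⊆ J₁ := by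
    rintro J₁ ⟨A₁, hA₁, hJ₁⟩ J₂ ⟨A₂, hA₂, hJ₂⟩ u hu₁ hu₂
    rcases eq_or_ne A₁ A₂ with rfl | hne
    · left; exact (A₁.2.mem_unique hJ₁ hJ₂ hu₁ hu₂) ▸ subset_rfl
    · rcases hc hA₁ hA₂ hne with h | h
      · obtain ⟨K, hK, hJK⟩ := h J₁ hJ₁
        have : K = J₂ := A₂.2.mem_unique hK hJ₂ (hJK hu₁) hu₂
        exact Or.inl (this ▸ hJK)
      · obtain ⟨K, hK, hJK⟩ := h J₂ hJ₂
        have : K = J₁ := A₁.2.mem_unique hK hJ₁ (hJK hu₂) hu₁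
        exact Or.inr (this ▸ hJK)
  set big : ℝ → Set ℝ := fun u => ⋃₀ {J | J ∈ S ∧ u ∈ J} with hbig
  have hmem_big : ∀ {J : Set ℝ}, J ∈ S → ∀ {u : ℝ}, u ∈ J → J ⊆ big u := by
    intro J hJ u hu z hz
    exact ⟨J, ⟨hJ, hu⟩, hz⟩
  have hbig_sub : ∀ u, big u ⊆ Icc (0:ℝ) 1 := by
    rintro u z ⟨J, ⟨hJ, hu⟩, hz⟩
    exact (hgood J hJ).1 hz
  have hbig_coh : ∀ u v : ℝ, v ∈ big u → big v = big u := by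
    have key : ∀ u v : ℝ, v ∈ big u → big v ⊆ big u := by
      rintro u v ⟨J, ⟨hJ, huJ⟩, hvJ⟩ z ⟨K, ⟨hK, hvK⟩, hzK⟩
      rcases hchainsub K hK J hJ v hvK hvJ with h | h
      · exact hmem_big hJ huJ (h hzK)
      · exact hmem_big hK (h huJ) hzK
    intro u v hv
    refine le_antisymm (key u v hv) ?_
    obtain ⟨J, ⟨hJ, huJ⟩, hvJ⟩ := hv
    exact key v u (hmem_big hJ hvJ huJ)
  set Mstar : Set (Set ℝ) := {L | ∃ u : ℝ, (∃ J ∈ S, u ∈ J) ∧ L = big u} with hMstar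
  have hbig_ord : ∀ u, (big u).OrdConnected := by
    intro u
    rw [ordConnected_iff]
    rintro x ⟨J₁, ⟨hJ₁, hu₁⟩, hx⟩ y ⟨J₂, ⟨hJ₂, hu₂⟩, hy⟩ hxy
    rcases hchainsub J₁ hJ₁ J₂ hJ₂ u hu₁ hu₂ with h | h
    · exact fun z hz => hmem_big hJ₂ hu₂ ((hgood J₂ hJ₂).2.1.out (h hx) hy hz)
    · exact fun z hz => hmem_big hJ₁ hu₁ ((hgood J₁ hJ₁).2.1.out hx (h hy) hz)
  have hbig_ends : ∀ u, (∃ J ∈ S, u ∈ J) → F (sInf (big u)) = F (sSup (big u)) := by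
    rintro u ⟨J₀, hJ₀, hu₀⟩
    have huu : u ∈ big u := hmem_big hJ₀ hu₀ hu₀
    have hne : (big u).Nonempty := ⟨u, huu⟩
    have hbdd_b : BddBelow (big u) := BddBelow.mono (hbig_sub u) bddBelow_Icc
    have hbdd_a : BddAbove (big u) := BddAbove.mono (hbig_sub u) bddAbove_Icc
    apply eq_of_forall_dist_le'
    intro ε hε
    obtain ⟨δ, hδ, hδF⟩ := Metric.uniformContinuous_iff.1 hF ε hε
    obtain ⟨z₁, hz₁mem, hz₁⟩ := exists_lt_of_csInf_lt hne (lt_add_of_pos_right _ hδ)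
    obtain ⟨z₂, hz₂mem, hz₂⟩ := exists_lt_of_lt_csSup hne (sub_lt_self _ hδ)
    obtain ⟨J₁, ⟨hJ₁, hu₁⟩, hz₁J⟩ := hz₁mem
    obtain ⟨J₂, ⟨hJ₂, hu₂⟩, hz₂J⟩ := hz₂mem
    -- K: the larger of J₁, J₂
    obtain ⟨K, hK, hu, hz₁K, hz₂K⟩ : ∃ K, K ∈ S ∧ u ∈ K ∧ z₁ ∈ K ∧ z₂ ∈ K := by
      rcases hchainsub J₁ hJ₁ J₂ hJ₂ u hu₁ hu₂ with h | h
      · exact ⟨J₂, hJ₂, hu₂, h hz₁J, hz₂J⟩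
      · exact ⟨J₁, hJ₁, hu₁, hz₁J, h hz₂J⟩
    have hKsub : K ⊆ big u := hmem_big hK hu
    have hKgood := hgood K hK
    have h1 : sInf (big u) ≤ sInf K := csInf_le_csInf hbdd_b ⟨z₁, hz₁K⟩ hKsub
    have h2 : sInf K ≤ z₁ := csInf_le hKgood.bddBelow hz₁K
    have h3 : sSup K ≤ sSup (big u) := csSup_le_csSup hbdd_a ⟨z₂, hz₂K⟩ hKsub
    have h4 : z₂ ≤ sSup K := le_csSup hKgood.bddAbove hz₂K
    have d1 : dist (sInf (big u)) (sInf K) < δ := by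
      rw [Real.dist_eq, abs_of_nonpos (by linarith)]
      linarith
    have d2 : dist (sSup K) (sSup (big u)) < δ := by
      rw [Real.dist_eq, abs_of_nonpos (by linarith)]
      linarith
    calc dist (F (sInf (big u))) (F (sSup (big u)))
        ≤ dist (F (sInf (big u))) (F (sInf K)) + dist (F (sInf K)) (F (sSup K))
            + dist (F (sSup K)) (F (sSup (big u))) := dist_triangle4 _ _ _ _
      _ ≤ ε + 0 + ε := by
          have e3 : dist (F (sInf K)) (F (sSup K)) = 0 := by
            rw [hKgood.2.2.2]; simp
          exact add_le_add (add_le_add (hδF d1).le e3.le) (hδF d2).le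
      _ ≤ 2 * ε := by linarith
  have hfamMstar : IsFam F Mstar := by
    constructor
    · rintro L ⟨u, hu, rfl⟩
      obtain ⟨J, hJ, huJ⟩ := hu
      refine ⟨hbig_sub u, hbig_ord u, ?_, hbig_ends u ⟨J, hJ, huJ⟩⟩
      obtain ⟨a, ha, b, hb, hab⟩ := (hgood J hJ).2.2.1
      exact ⟨a, hmem_big hJ huJ ha, b, hmem_big hJ huJ hb, hab⟩
    · rintro L₁ ⟨u₁, hu₁, rfl⟩ L₂ ⟨u₂, hu₂, rfl⟩ hne
      by_contra hint
      obtain ⟨z, hz₁, hz₂⟩ := nonempty_iff_ne_empty.2 hint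
      exact hne ((hbig_coh u₁ z hz₁).symm.trans (hbig_coh u₂ z hz₂))
  refine ⟨⟨Mstar, hfamMstar⟩, ?_⟩
  intro A hA J hJ
  obtain ⟨u, hu⟩ := (A.2.1 J hJ).nonempty
  have hJS : J ∈ S := ⟨A, hA, hJ⟩
  exact ⟨big u, ⟨u, ⟨J, hJS, hu⟩, rfl⟩, hmem_big hJS hu⟩

theorem exists_maximal_fam (F : ℝ → X) (hF : UniformContinuous F) :
    ∃ M, IsFam F M ∧ ∀ N, IsFam F N → Refines M N → Refines N M := by
  obtain ⟨A, hA⟩ := exists_maximal_of_chains_bounded (chain_bound F hF)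
    (fun {a b c} hab hbc J hJ => by
      obtain ⟨K, hK, hJK⟩ := hab J hJ
      obtain ⟨L, hL, hKL⟩ := hbc K hK
      exact ⟨L, hL, hJK.trans hKL⟩)
  exact ⟨A.1, A.2, fun N hN h => hA ⟨N, hN⟩ h⟩


/-- A maximal valid family. -/
structure MaxFam (F : ℝ → X) : Type _ where
  M : Set (Set ℝ)
  fam : IsFam F M
  max : ∀ N, IsFam F N → Refines M N → Refines N M

namespace MaxFam

variable {F : ℝ → X} (Φ : MaxFam F)

theorem eq_of_refines {N : Set (Set ℝ)} (hN : IsFam F N) (h : Refines Φ.M N) : Φ.M = N :=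
  refines_antisymm Φ.fam hN h (Φ.max N hN h)

theorem good {J : Set ℝ} (hJ : J ∈ Φ.M) : GoodInt F J := Φ.fam.1 J hJ

theorem sInf_mem {J : Set ℝ} (hJ : J ∈ Φ.M) : sInf J ∈ J := by
  by_contra ha
  have hg := Φ.good hJ
  have hne := hg.nonempty
  have hbb := hg.bddBelow
  have hba := hg.bddAbove
  set a := sInf J with hadef
  have haJ : ∀ j ∈ J, a < j := fun j hj =>
    lt_of_le_of_ne (csInf_le hbb hj) (fun h => ha (h ▸ hj))
  have haIcc : a ∈ Icc (0:ℝ) 1 := by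
    constructor
    · exact le_csInf hne (fun j hj => (hg.1 hj).1)
    · obtain ⟨j, hj⟩ := hne; exact le_trans (csInf_le hbb hj) (hg.1 hj).2
  have haSup : a ≤ sSup J := by
    obtain ⟨j, hj⟩ := hne; exact (haJ j hj).le.trans (le_csSup hba hj)
  by_cases hmem : ∃ L ∈ Φ.M, a ∈ L
  · obtain ⟨L, hL, haL⟩ := hmem
    have hgL := Φ.good hL
    have hLJ : L ≠ J := fun h => ha (h ▸ haL)
    have hLle : ∀ l ∈ L, l ≤ a := by
      intro l hl
      by_contra hla
      push_neg at hla
      obtain ⟨j, hj, hjl⟩ := exists_lt_of_csInf_lt hne hla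
      have : j ∈ L := hgL.2.1.out haL hl ⟨csInf_le hbb hj, hjl.le⟩
      exact hLJ (Φ.fam.mem_unique hL hJ this hj)
    set J' := L ∪ J with hJ'def
    have hJ'ne : J'.Nonempty := hne.mono subset_union_right
    have hbbJ' : BddBelow J' := hgL.bddBelow.union hbb
    have hbaJ' : BddAbove J' := hgL.bddAbove.union hba
    have hsInfJ' : sInf J' = sInf L := by
      apply le_antisymm
      · exact csInf_le_csInf hbbJ' hgL.nonempty subset_union_left
      · refine le_csInf hJ'ne ?_
        rintro z (hz | hz)
        · exact csInf_le hgL.bddBelow hz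
        · exact (csInf_le hgL.bddBelow haL).trans (haJ z hz).le
    have hsSupJ' : sSup J' = sSup J := by
      apply le_antisymm
      · refine csSup_le hJ'ne ?_
        rintro z (hz | hz)
        · exact (hLle z hz).trans haSup
        · exact le_csSup hba hz
      · exact csSup_le_csSup hbaJ' hne subset_union_right
    have hsSupL : sSup L = a := le_antisymm (csSup_le hgL.nonempty hLle) (le_csSup hgL.bddAbove haL)
    have hord : J'.OrdConnected := by
      rw [ordConnected_iff]
      rintro x (hx | hx) y (hy | hy) hxy
      · exact fun z hz => Or.inl (hgL.2.1.out hx hy hz)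
      · rintro z ⟨hxz, hzy⟩
        rcases le_or_gt z a with hza | haz
        · exact Or.inl (hgL.2.1.out hx haL ⟨hxz, hza⟩)
        · obtain ⟨j, hj, hjz⟩ := exists_lt_of_csInf_lt hne haz
          exact Or.inr (hg.2.1.out hj hy ⟨hjz.le, hzy⟩)
      · rintro z ⟨hxz, hzy⟩
        exact absurd (hxz.trans (hzy.trans (hLle y hy))) (not_le.2 (haJ x hx))
      · exact fun z hz => Or.inr (hg.2.1.out hx hy hz)
    have hgJ' : GoodInt F J' := by
      refine ⟨union_subset hgL.1 hg.1, hord, ?_, ?_⟩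
      · obtain ⟨p, hp, q, hq, hpq⟩ := hg.2.2.1
        exact ⟨p, Or.inr hp, q, Or.inr hq, hpq⟩
      · rw [hsInfJ', hsSupJ', hgL.2.2.2, hsSupL, hadef]
        exact hg.2.2.2
    set N := insert J' {K | K ∈ Φ.M ∧ K ≠ L ∧ K ≠ J} with hNdef
    have hfamN : IsFam F N := by
      constructor
      · rintro K (rfl | ⟨hK, -, -⟩)
        · exact hgJ'
        · exact Φ.good hK
      · have hdisj : ∀ K, K ∈ Φ.M → K ≠ L → K ≠ J → K ∩ J' = ∅ := by
          intro K hK h1 h2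
          rw [hJ'def, inter_union_distrib_left, Φ.fam.2 K hK L hL h1,
            Φ.fam.2 K hK J hJ h2, union_empty]
        rintro K₁ hK₁ K₂ hK₂ hne'
        rcases hK₁ with rfl | ⟨hK₁, hK₁L, hK₁J⟩ <;> rcases hK₂ with rfl | ⟨hK₂, hK₂L, hK₂J⟩
        · exact absurd rfl hne'
        · rw [inter_comm]; exact hdisj _ hK₂ hK₂L hK₂J
        · exact hdisj _ hK₁ hK₁L hK₁J
        · exact Φ.fam.2 _ hK₁ _ hK₂ hne'
    have href : Refines Φ.M N := by
      intro K hK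
      by_cases h1 : K = L
      · exact ⟨J', mem_insert _ _, h1 ▸ subset_union_left⟩
      by_cases h2 : K = J
      · exact ⟨J', mem_insert _ _, h2 ▸ subset_union_right⟩
      · exact ⟨K, Or.inr ⟨hK, h1, h2⟩, subset_rfl⟩
    have hMN := Φ.eq_of_refines hfamN href
    have hJ'M : J' ∈ Φ.M := by rw [hMN]; exact mem_insert _ _
    have hJ'J : J' ≠ J := fun h => ha (h ▸ (Or.inl haL : a ∈ J'))
    have hdd := Φ.fam.2 J' hJ'M J hJ hJ'J
    obtain ⟨j, hj⟩ := hne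
    have hjmem : j ∈ J' ∩ J := ⟨Or.inr hj, hj⟩
    rw [hdd] at hjmem
    exact hjmem
  · push_neg at hmem
    set J' := insert a J with hJ'def
    have hord : J'.OrdConnected := by
      rw [ordConnected_iff]
      rintro x (rfl | hx) y (rfl | hy) hxy
      · intro z hz
        exact Or.inl (le_antisymm hz.2 hz.1)
      · rintro z ⟨haz, hzy⟩
        rcases eq_or_lt_of_le haz with rfl | haz'
        · exact mem_insert _ _
        · obtain ⟨j, hj, hjz⟩ := exists_lt_of_csInf_lt hne haz'
          exact Or.inr (hg.2.1.out hj hy ⟨hjz.le, hzy⟩)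
      · rintro z ⟨hxz, hza⟩
        exact absurd (hxz.trans hza) (not_le.2 (haJ x hx))
      · exact fun z hz => Or.inr (hg.2.1.out hx hy hz)
    have hsInfJ' : sInf J' = a := by
      rw [hJ'def, csInf_insert hbb hne, hadef]
      exact min_self _
    have hsSupJ' : sSup J' = sSup J := by
      rw [hJ'def, csSup_insert hba hne]
      exact max_eq_right haSup
    have hgJ' : GoodInt F J' := by
      refine ⟨insert_subset haIcc hg.1, hord, ?_, ?_⟩
      · obtain ⟨p, hp, q, hq, hpq⟩ := hg.2.2.1
        exact ⟨p, Or.inr hp, q, Or.inr hq, hpq⟩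
      · rw [hsInfJ', hsSupJ', hadef]
        exact hg.2.2.2
    set N := insert J' {K | K ∈ Φ.M ∧ K ≠ J} with hNdef
    have hfamN : IsFam F N := by
      constructor
      · rintro K (rfl | ⟨hK, -⟩)
        · exact hgJ'
        · exact Φ.good hK
      · have hdisj : ∀ K, K ∈ Φ.M → K ≠ J → K ∩ J' = ∅ := by
          intro K hK h2
          rw [hJ'def, inter_insert_of_notMem (hmem K hK), Φ.fam.2 K hK J hJ h2]
        rintro K₁ hK₁ K₂ hK₂ hne'
        rcases hK₁ with rfl | ⟨hK₁, hK₁J⟩ <;> rcases hK₂ with rfl | ⟨hK₂, hK₂J⟩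
        · exact absurd rfl hne'
        · rw [inter_comm]; exact hdisj _ hK₂ hK₂J
        · exact hdisj _ hK₁ hK₁J
        · exact Φ.fam.2 _ hK₁ _ hK₂ hne'
    have href : Refines Φ.M N := by
      intro K hK
      by_cases h2 : K = J
      · exact ⟨J', mem_insert _ _, h2 ▸ subset_insert _ _⟩
      · exact ⟨K, Or.inr ⟨hK, h2⟩, subset_rfl⟩
    have hMN := Φ.eq_of_refines hfamN href
    have hJ'M : J' ∈ Φ.M := by rw [hMN]; exact mem_insert _ _
    exact hmem J' hJ'M (mem_insert _ _)

theorem sSup_mem {J : Set ℝ} (hJ : J ∈ Φ.M) : sSup J ∈ J := by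
  by_contra ha
  have hg := Φ.good hJ
  have hne := hg.nonempty
  have hbb := hg.bddBelow
  have hba := hg.bddAbove
  set a := sSup J with hadef
  have haJ : ∀ j ∈ J, j < a := fun j hj =>
    lt_of_le_of_ne (le_csSup hba hj) (fun h => ha (h ▸ hj))
  have haIcc : a ∈ Icc (0:ℝ) 1 := by
    constructor
    · obtain ⟨j, hj⟩ := hne; exact le_trans (hg.1 hj).1 (le_csSup hba hj)
    · exact csSup_le hne (fun j hj => (hg.1 hj).2)
  have haInf : sInf J ≤ a := by
    obtain ⟨j, hj⟩ := hne; exact (csInf_le hbb hj).trans (haJ j hj).le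
  by_cases hmem : ∃ L ∈ Φ.M, a ∈ L
  · obtain ⟨L, hL, haL⟩ := hmem
    have hgL := Φ.good hL
    have hLJ : L ≠ J := fun h => ha (h ▸ haL)
    have hLle : ∀ l ∈ L, a ≤ l := by
      intro l hl
      by_contra hla
      push_neg at hla
      obtain ⟨j, hj, hjl⟩ := exists_lt_of_lt_csSup hne hla
      have : j ∈ L := hgL.2.1.out hl haL ⟨hjl.le, le_csSup hba hj⟩
      exact hLJ (Φ.fam.mem_unique hL hJ this hj)
    set J' := J ∪ L with hJ'def
    have hJ'ne : J'.Nonempty := hne.mono subset_union_left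
    have hbbJ' : BddBelow J' := hbb.union hgL.bddBelow
    have hbaJ' : BddAbove J' := hba.union hgL.bddAbove
    have hsSupJ' : sSup J' = sSup L := by
      apply le_antisymm
      · refine csSup_le hJ'ne ?_
        rintro z (hz | hz)
        · exact (haJ z hz).le.trans (le_csSup hgL.bddAbove haL)
        · exact le_csSup hgL.bddAbove hz
      · exact csSup_le_csSup hbaJ' hgL.nonempty subset_union_right
    have hsInfJ' : sInf J' = sInf J := by
      apply le_antisymm
      · exact csInf_le_csInf hbbJ' hne subset_union_left
      · refine le_csInf hJ'ne ?_
        rintro z (hz | hz)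
        · exact csInf_le hbb hz
        · exact haInf.trans (hLle z hz)
    have hsInfL : sInf L = a := le_antisymm (csInf_le hgL.bddBelow haL) (le_csInf hgL.nonempty hLle)
    have hord : J'.OrdConnected := by
      rw [ordConnected_iff]
      rintro x (hx | hx) y (hy | hy) hxy
      · exact fun z hz => Or.inl (hg.2.1.out hx hy hz)
      · rintro z ⟨hxz, hzy⟩
        rcases le_or_gt a z with hza | haz
        · exact Or.inr (hgL.2.1.out haL hy ⟨hza, hzy⟩)
        · obtain ⟨j, hj, hjz⟩ := exists_lt_of_lt_csSup hne haz
          exact Or.inl (hg.2.1.out hx hj ⟨hxz, hjz.le⟩)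
      · rintro z ⟨hxz, hzy⟩
        exact absurd ((hLle x hx).trans (hxz.trans hzy)) (not_le.2 (haJ y hy))
      · exact fun z hz => Or.inr (hgL.2.1.out hx hy hz)
    have hgJ' : GoodInt F J' := by
      refine ⟨union_subset hg.1 hgL.1, hord, ?_, ?_⟩
      · obtain ⟨p, hp, q, hq, hpq⟩ := hg.2.2.1
        exact ⟨p, Or.inl hp, q, Or.inl hq, hpq⟩
      · rw [hsInfJ', hsSupJ', ← hgL.2.2.2, hsInfL, hadef, ← hg.2.2.2]
    set N := insert J' {K | K ∈ Φ.M ∧ K ≠ L ∧ K ≠ J} with hNdef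
    have hfamN : IsFam F N := by
      constructor
      · rintro K (rfl | ⟨hK, -, -⟩)
        · exact hgJ'
        · exact Φ.good hK
      · have hdisj : ∀ K, K ∈ Φ.M → K ≠ L → K ≠ J → K ∩ J' = ∅ := by
          intro K hK h1 h2
          rw [hJ'def, inter_union_distrib_left, Φ.fam.2 K hK J hJ h2,
            Φ.fam.2 K hK L hL h1, union_empty]
        rintro K₁ hK₁ K₂ hK₂ hne'
        rcases hK₁ with rfl | ⟨hK₁, hK₁L, hK₁J⟩ <;> rcases hK₂ with rfl | ⟨hK₂, hK₂L, hK₂J⟩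
        · exact absurd rfl hne'
        · rw [inter_comm]; exact hdisj _ hK₂ hK₂L hK₂J
        · exact hdisj _ hK₁ hK₁L hK₁J
        · exact Φ.fam.2 _ hK₁ _ hK₂ hne'
    have href : Refines Φ.M N := by
      intro K hK
      by_cases h1 : K = L
      · exact ⟨J', mem_insert _ _, h1 ▸ subset_union_right⟩
      by_cases h2 : K = J
      · exact ⟨J', mem_insert _ _, h2 ▸ subset_union_left⟩
      · exact ⟨K, Or.inr ⟨hK, h1, h2⟩, subset_rfl⟩
    have hMN := Φ.eq_of_refines hfamN href
    have hJ'M : J' ∈ Φ.M := by rw [hMN]; exact mem_insert _ _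
    have hJ'J : J' ≠ J := fun h => ha (h ▸ (Or.inr haL : a ∈ J'))
    have hdd := Φ.fam.2 J' hJ'M J hJ hJ'J
    obtain ⟨j, hj⟩ := hne
    have hjmem : j ∈ J' ∩ J := ⟨Or.inl hj, hj⟩
    rw [hdd] at hjmem
    exact hjmem
  · push_neg at hmem
    set J' := insert a J with hJ'def
    have hord : J'.OrdConnected := by
      rw [ordConnected_iff]
      rintro x (rfl | hx) y (rfl | hy) hxy
      · intro z hz
        exact Or.inl (le_antisymm hz.2 hz.1)
      · rintro z ⟨hxz, hzy⟩
        exact absurd (hxz.trans hzy) (not_le.2 (haJ y hy))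
      · rintro z ⟨hxz, hzy⟩
        rcases eq_or_lt_of_le hzy with rfl | hza'
        · exact mem_insert _ _
        · obtain ⟨j, hj, hjz⟩ := exists_lt_of_lt_csSup hne hza'
          exact Or.inr (hg.2.1.out hx hj ⟨hxz, hjz.le⟩)
      · exact fun z hz => Or.inr (hg.2.1.out hx hy hz)
    have hsSupJ' : sSup J' = a := by
      rw [hJ'def, csSup_insert hba hne, hadef]
      exact max_self _
    have hsInfJ' : sInf J' = sInf J := by
      rw [hJ'def, csInf_insert hbb hne]
      exact min_eq_right haInf
    have hgJ' : GoodInt F J' := by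
      refine ⟨insert_subset haIcc hg.1, hord, ?_, ?_⟩
      · obtain ⟨p, hp, q, hq, hpq⟩ := hg.2.2.1
        exact ⟨p, Or.inr hp, q, Or.inr hq, hpq⟩
      · rw [hsInfJ', hsSupJ', hadef]
        exact hg.2.2.2
    set N := insert J' {K | K ∈ Φ.M ∧ K ≠ J} with hNdef
    have hfamN : IsFam F N := by
      constructor
      · rintro K (rfl | ⟨hK, -⟩)
        · exact hgJ'
        · exact Φ.good hK
      · have hdisj : ∀ K, K ∈ Φ.M → K ≠ J → K ∩ J' = ∅ := by
          intro K hK h2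
          rw [hJ'def, inter_insert_of_notMem (hmem K hK), Φ.fam.2 K hK J hJ h2]
        rintro K₁ hK₁ K₂ hK₂ hne'
        rcases hK₁ with rfl | ⟨hK₁, hK₁J⟩ <;> rcases hK₂ with rfl | ⟨hK₂, hK₂J⟩
        · exact absurd rfl hne'
        · rw [inter_comm]; exact hdisj _ hK₂ hK₂J
        · exact hdisj _ hK₁ hK₁J
        · exact Φ.fam.2 _ hK₁ _ hK₂ hne'
    have href : Refines Φ.M N := by
      intro K hK
      by_cases h2 : K = J
      · exact ⟨J', mem_insert _ _, h2 ▸ subset_insert _ _⟩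
      · exact ⟨K, Or.inr ⟨hK, h2⟩, subset_rfl⟩
    have hMN := Φ.eq_of_refines hfamN href
    have hJ'M : J' ∈ Φ.M := by rw [hMN]; exact mem_insert _ _
    exact hmem J' hJ'M (mem_insert _ _)

noncomputable def cls (u : ℝ) : Set ℝ :=
  letI := Classical.dec (∃ J ∈ Φ.M, u ∈ J)
  if h : ∃ J ∈ Φ.M, u ∈ J then h.choose else {u}

theorem cls_spec (u : ℝ) :
    (Φ.cls u ∈ Φ.M ∧ u ∈ Φ.cls u) ∨ (Φ.cls u = {u} ∧ ¬∃ J ∈ Φ.M, u ∈ J) := by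
  unfold cls
  split_ifs with h
  · exact Or.inl ⟨h.choose_spec.1, h.choose_spec.2⟩
  · exact Or.inr ⟨rfl, h⟩

theorem mem_cls (u : ℝ) : u ∈ Φ.cls u := by
  rcases Φ.cls_spec u with ⟨-, h⟩ | ⟨h, -⟩
  · exact h
  · rw [h]; exact rfl

theorem cls_eq_of_mem {J : Set ℝ} (hJ : J ∈ Φ.M) {u : ℝ} (hu : u ∈ J) : Φ.cls u = J := by
  rcases Φ.cls_spec u with ⟨hm, hum⟩ | ⟨-, hno⟩
  · exact Φ.fam.mem_unique hm hJ hum hu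
  · exact absurd ⟨J, hJ, hu⟩ hno

theorem cls_nonempty (u : ℝ) : (Φ.cls u).Nonempty := ⟨u, Φ.mem_cls u⟩

theorem cls_bddBelow (u : ℝ) : BddBelow (Φ.cls u) := by
  rcases Φ.cls_spec u with ⟨hm, -⟩ | ⟨h, -⟩
  · exact (Φ.good hm).bddBelow
  · rw [h]; exact bddBelow_singleton

theorem cls_bddAbove (u : ℝ) : BddAbove (Φ.cls u) := by
  rcases Φ.cls_spec u with ⟨hm, -⟩ | ⟨h, -⟩
  · exact (Φ.good hm).bddAbove
  · rw [h]; exact bddAbove_singleton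

theorem cls_ord (u : ℝ) : (Φ.cls u).OrdConnected := by
  rcases Φ.cls_spec u with ⟨hm, -⟩ | ⟨h, -⟩
  · exact (Φ.good hm).2.1
  · rw [h]; exact ordConnected_singleton

theorem cls_sub {u : ℝ} (hu : u ∈ Icc (0:ℝ) 1) : Φ.cls u ⊆ Icc (0:ℝ) 1 := by
  rcases Φ.cls_spec u with ⟨hm, -⟩ | ⟨h, -⟩
  · exact (Φ.good hm).1
  · rw [h]; exact singleton_subset_iff.2 hu

noncomputable def sig (u : ℝ) : ℝ := sInf (Φ.cls u)

noncomputable def tau (u : ℝ) : ℝ := sSup (Φ.cls u)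

theorem sig_le_self (u : ℝ) : Φ.sig u ≤ u := csInf_le (Φ.cls_bddBelow u) (Φ.mem_cls u)

theorem self_le_tau (u : ℝ) : u ≤ Φ.tau u := le_csSup (Φ.cls_bddAbove u) (Φ.mem_cls u)

theorem sig_mem (u : ℝ) : Φ.sig u ∈ Φ.cls u := by
  rcases Φ.cls_spec u with ⟨hm, -⟩ | ⟨h, -⟩
  · exact Φ.sInf_mem hm
  · unfold sig; rw [h, csInf_singleton]; exact rfl

theorem tau_mem (u : ℝ) : Φ.tau u ∈ Φ.cls u := by
  rcases Φ.cls_spec u with ⟨hm, -⟩ | ⟨h, -⟩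
  · exact Φ.sSup_mem hm
  · unfold tau; rw [h, csSup_singleton]; exact rfl

theorem F_sig_tau (u : ℝ) : F (Φ.sig u) = F (Φ.tau u) := by
  rcases Φ.cls_spec u with ⟨hm, -⟩ | ⟨h, -⟩
  · exact (Φ.good hm).2.2.2
  · unfold sig tau; rw [h, csInf_singleton, csSup_singleton]

theorem cls_eq_Icc (u : ℝ) : Φ.cls u = Icc (Φ.sig u) (Φ.tau u) := by
  apply le_antisymm
  · intro z hz
    exact ⟨csInf_le (Φ.cls_bddBelow u) hz, le_csSup (Φ.cls_bddAbove u) hz⟩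
  · intro z hz
    exact (Φ.cls_ord u).out (Φ.sig_mem u) (Φ.tau_mem u) hz

theorem cls_coherent {u v : ℝ} (hv : v ∈ Φ.cls u) : Φ.cls v = Φ.cls u := by
  rcases Φ.cls_spec u with ⟨hm, -⟩ | ⟨h, -⟩
  · exact Φ.cls_eq_of_mem hm hv
  · rw [h] at hv ⊢
    rw [show v = u from hv]
    exact h

noncomputable def collapse (u : ℝ) : X := F (Φ.sig u)

theorem collapse_const {u v : ℝ} (hv : v ∈ Φ.cls u) : Φ.collapse v = Φ.collapse u := by
  unfold collapse sig
  rw [Φ.cls_coherent hv]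

theorem collapse_eq_tau (u : ℝ) : Φ.collapse u = F (Φ.tau u) := Φ.F_sig_tau u

theorem collapse_zero : Φ.collapse 0 = F 0 := by
  unfold collapse
  have h1 : Φ.sig 0 = 0 := le_antisymm (Φ.sig_le_self 0)
    (Φ.cls_sub (by norm_num) (Φ.sig_mem 0)).1
  rw [h1]

theorem collapse_one : Φ.collapse 1 = F 1 := by
  rw [Φ.collapse_eq_tau]
  have h1 : Φ.tau 1 = 1 := le_antisymm
    (Φ.cls_sub (by norm_num) (Φ.tau_mem 1)).2 (Φ.self_le_tau 1)
  rw [h1]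

theorem dichotomy {u v : ℝ} (huv : u ≤ v) :
    Φ.collapse v = Φ.collapse u ∨
    ∃ p ∈ Icc u v, ∃ q ∈ Icc u v, Φ.collapse u = F p ∧ Φ.collapse v = F q := by
  by_cases hv : v ∈ Φ.cls u
  · exact Or.inl (Φ.collapse_const hv)
  · right
    have htauu : Φ.tau u ≤ v := by
      by_contra h
      push_neg at h
      exact hv (by rw [Φ.cls_eq_Icc u]; exact ⟨(Φ.sig_le_self u).trans huv, h.le⟩)
    have hsigv : u ≤ Φ.sig v := by
      by_contra h
      push_neg at h
      have humem : u ∈ Φ.cls v := by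
        rw [Φ.cls_eq_Icc v]
        exact ⟨h.le, huv.trans (Φ.self_le_tau v)⟩
      have hcc := Φ.cls_coherent humem
      exact hv (by rw [hcc]; exact Φ.mem_cls v)
    exact ⟨Φ.tau u, ⟨Φ.self_le_tau u, htauu⟩, Φ.sig v, ⟨hsigv, Φ.sig_le_self v⟩,
      Φ.collapse_eq_tau u, rfl⟩

theorem collapse_uniformContinuous (hF : UniformContinuous F) :
    UniformContinuous Φ.collapse := by
  rw [Metric.uniformContinuous_iff] at hF ⊢
  intro ε hε
  obtain ⟨δ, hδ, hδF⟩ := hF ε hε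
  refine ⟨δ, hδ, ?_⟩
  suffices H : ∀ a b : ℝ, a ≤ b → dist a b < δ → dist (Φ.collapse a) (Φ.collapse b) < ε by
    intro a b hab
    rcases le_total a b with h | h
    · exact H a b h hab
    · rw [dist_comm]
      exact H b a h (by rwa [dist_comm])
  intro a b h hab
  rcases Φ.dichotomy h with heq | ⟨p, hp, q, hq, h1, h2⟩
  · rw [heq, dist_self]; exact hε
  · rw [h1, h2]
    apply hδF
    rw [Real.dist_eq] at hab ⊢
    rw [abs_of_nonpos (by linarith : a - b ≤ 0)] at hab
    have h3 : |p - q| ≤ b - a := abs_sub_le_iff.2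
      ⟨by linarith [hp.1, hp.2, hq.1, hq.2], by linarith [hp.1, hp.2, hq.1, hq.2]⟩
    linarith

theorem collapse_continuous (hF : UniformContinuous F) : Continuous Φ.collapse :=
  (Φ.collapse_uniformContinuous hF).continuous

/-- The key consequence of maximality: if the collapsed map takes equal values at
`u ≤ v` in `[0,1]` it is constant on `[u, v]`. -/
theorem collapse_eq_imp_const {u v : ℝ} (hu : u ∈ Icc (0:ℝ) 1) (hv : v ∈ Icc (0:ℝ) 1)
    (huv : u ≤ v) (heq : Φ.collapse u = Φ.collapse v) :
    ∀ w ∈ Icc u v, Φ.collapse w = Φ.collapse u := by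
  by_contra hcon
  push_neg at hcon
  obtain ⟨w₀, hw₀, hne⟩ := hcon
  have hvcls : v ∉ Φ.cls u := by
    intro hmem
    apply hne
    apply Φ.collapse_const
    have hvI : v ∈ Icc (Φ.sig u) (Φ.tau u) := by rw [← Φ.cls_eq_Icc u]; exact hmem
    rw [Φ.cls_eq_Icc u]
    exact ⟨(Φ.sig_le_self u).trans hw₀.1, hw₀.2.trans hvI.2⟩
  set a := Φ.sig u with hadef
  set b := Φ.tau v with hbdef
  have hau : a ≤ u := Φ.sig_le_self u
  have hvb : v ≤ b := Φ.self_le_tau v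
  have hab : a ≤ b := hau.trans (huv.trans hvb)
  have ha0 : 0 ≤ a := (Φ.cls_sub hu (Φ.sig_mem u)).1
  have hb1 : b ≤ 1 := (Φ.cls_sub hv (Φ.tau_mem v)).2
  have htauu : Φ.tau u ≤ v := by
    by_contra h
    push_neg at h
    exact hvcls (by rw [Φ.cls_eq_Icc u]; exact ⟨hau.trans huv, h.le⟩)
  have hsigv : u ≤ Φ.sig v := by
    by_contra h
    push_neg at h
    have humem : u ∈ Φ.cls v := by
      rw [Φ.cls_eq_Icc v]
      exact ⟨h.le, huv.trans hvb⟩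
    have hcc := Φ.cls_coherent humem
    exact hvcls (by rw [hcc]; exact Φ.mem_cls v)
  have hclsu_sub : Φ.cls u ⊆ Icc a b := by
    rw [Φ.cls_eq_Icc u]
    exact Icc_subset_Icc le_rfl (htauu.trans hvb)
  have hclsv_sub : Φ.cls v ⊆ Icc a b := by
    rw [Φ.cls_eq_Icc v]
    exact Icc_subset_Icc (hau.trans hsigv) le_rfl
  have hLsub : ∀ L ∈ Φ.M, (L ∩ Icc a b).Nonempty → L ⊆ Icc a b := by
    rintro L hL ⟨z, hzL, hzI⟩ w hwL
    rcases le_or_gt a w with haw | hwa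
    · rcases le_or_gt w b with hwb | hbw
      · exact ⟨haw, hwb⟩
      · exfalso
        have hbL : b ∈ L := (Φ.good hL).2.1.out hzL hwL ⟨hzI.2, hbw.le⟩
        have hbv : b ∈ Φ.cls v := Φ.tau_mem v
        rcases Φ.cls_spec v with ⟨hvm, -⟩ | ⟨hsing, hnomem⟩
        · have hLv : L = Φ.cls v := Φ.fam.mem_unique hL hvm hbL hbv
          have : w ∈ Icc a b := hclsv_sub (hLv ▸ hwL)
          exact absurd this.2 (not_le.2 hbw)
        · have hbveq : b = v := by rw [hsing] at hbv; exact hbv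
          exact hnomem ⟨L, hL, hbveq ▸ hbL⟩
    · exfalso
      have haL : a ∈ L := (Φ.good hL).2.1.out hwL hzL ⟨hwa.le, hzI.1⟩
      have hav : a ∈ Φ.cls u := Φ.sig_mem u
      rcases Φ.cls_spec u with ⟨hum, -⟩ | ⟨hsing, hnomem⟩
      · have hLu : L = Φ.cls u := Φ.fam.mem_unique hL hum haL hav
        have : w ∈ Icc a b := hclsu_sub (hLu ▸ hwL)
        exact absurd this.1 (not_le.2 hwa)
      · have haueq : a = u := by rw [hsing] at hav; exact hav
        exact hnomem ⟨L, hL, haueq ▸ haL⟩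
  have huv' : u < v := by
    rcases eq_or_lt_of_le huv with rfl | h
    · exact absurd (by rw [le_antisymm hw₀.2 hw₀.1]) hne
    · exact h
  have hgI : GoodInt F (Icc a b) := by
    refine ⟨Icc_subset_Icc ha0 hb1, ordConnected_Icc,
      ⟨u, ⟨hau, huv.trans hvb⟩, v, ⟨hau.trans huv, hvb⟩, huv'.ne⟩, ?_⟩
    rw [csInf_Icc hab, csSup_Icc hab]
    calc F a = Φ.collapse u := rfl
      _ = Φ.collapse v := heq
      _ = F b := Φ.collapse_eq_tau v
  set N := insert (Icc a b) {K | K ∈ Φ.M ∧ K ∩ Icc a b = ∅} with hN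
  have hfamN : IsFam F N := by
    constructor
    · rintro K (rfl | ⟨hK, -⟩)
      · exact hgI
      · exact Φ.good hK
    · rintro K₁ hK₁ K₂ hK₂ hne'
      rcases hK₁ with rfl | ⟨hK₁, hK₁I⟩ <;> rcases hK₂ with rfl | ⟨hK₂, hK₂I⟩
      · exact absurd rfl hne'
      · rw [inter_comm]; exact hK₂I
      · exact hK₁I
      · exact Φ.fam.2 _ hK₁ _ hK₂ hne'
  have href : Refines Φ.M N := by
    intro K hK
    by_cases hint : (K ∩ Icc a b).Nonempty
    · exact ⟨Icc a b, mem_insert _ _, hLsub K hK hint⟩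
    · exact ⟨K, Or.inr ⟨hK, not_nonempty_iff_eq_empty.1 hint⟩, subset_rfl⟩
  have hMN := Φ.eq_of_refines hfamN href
  have hIM : Icc a b ∈ Φ.M := by rw [hMN]; exact mem_insert _ _
  have hclsI : Φ.cls u = Icc a b := Φ.cls_eq_of_mem hIM ⟨hau, huv.trans hvb⟩
  exact hvcls (by rw [hclsI]; exact ⟨hau.trans huv, hvb⟩)

section Hfun

variable (e : ℕ → ℚ)

noncomputable def hterm (n : ℕ) (u : ℝ) : ℝ :=
  (1/2:ℝ)^n * diam (Φ.collapse '' Icc ((e n : ℝ)) u)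

noncomputable def hfun (u : ℝ) : ℝ := ∑' n, Φ.hterm e n u

variable {e}

theorem collapse_image_sub (s : Set ℝ) : Φ.collapse '' s ⊆ range F := by
  rintro _ ⟨w, -, rfl⟩
  exact ⟨Φ.sig w, rfl⟩

theorem collapse_image_bounded (hb : Bornology.IsBounded (range F)) (s : Set ℝ) :
    Bornology.IsBounded (Φ.collapse '' s) :=
  hb.subset (Φ.collapse_image_sub s)

theorem hterm_nonneg (n : ℕ) (u : ℝ) : 0 ≤ Φ.hterm e n u :=
  mul_nonneg (by positivity) diam_nonneg

theorem hterm_le (hb : Bornology.IsBounded (range F)) (n : ℕ) (u : ℝ) :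
    Φ.hterm e n u ≤ (1/2:ℝ)^n * diam (range F) :=
  mul_le_mul_of_nonneg_left (diam_mono (Φ.collapse_image_sub _) hb) (by positivity)

theorem hterm_mono (hb : Bornology.IsBounded (range F)) (n : ℕ) {u v : ℝ} (huv : u ≤ v) :
    Φ.hterm e n u ≤ Φ.hterm e n v :=
  mul_le_mul_of_nonneg_left
    (diam_mono (image_mono (Icc_subset_Icc_right huv)) (Φ.collapse_image_bounded hb _))
    (by positivity)

theorem hterm_summable (hb : Bornology.IsBounded (range F)) (u : ℝ) :
    Summable (fun n => Φ.hterm e n u) :=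
  Summable.of_nonneg_of_le (fun n => Φ.hterm_nonneg n u) (fun n => Φ.hterm_le hb n u)
    (summable_geometric_two.mul_right _)

theorem hfun_mono (hb : Bornology.IsBounded (range F)) {u v : ℝ} (huv : u ≤ v) :
    Φ.hfun e u ≤ Φ.hfun e v :=
  Summable.tsum_le_tsum (fun n => Φ.hterm_mono hb n huv) (Φ.hterm_summable hb u) (Φ.hterm_summable hb v)

theorem hterm_le_add (hb : Bornology.IsBounded (range F)) (n : ℕ) {u v : ℝ} (huv : u ≤ v) :
    Φ.hterm e n v ≤ Φ.hterm e n u + (1/2:ℝ)^n * diam (Φ.collapse '' Icc u v) := by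
  set z := ((e n : ℚ) : ℝ) with hz
  rcases le_or_gt z u with hzu | huz
  · have hsplit : Icc z v = Icc z u ∪ Icc u v := (Icc_union_Icc_eq_Icc hzu huv).symm
    have hmem1 : Φ.collapse u ∈ Φ.collapse '' Icc z u := mem_image_of_mem _ ⟨hzu, le_rfl⟩
    have hmem2 : Φ.collapse u ∈ Φ.collapse '' Icc u v := mem_image_of_mem _ ⟨le_rfl, huv⟩
    have hd := diam_union hmem1 hmem2
    rw [dist_self] at hd
    calc Φ.hterm e n v = (1/2:ℝ)^n * diam (Φ.collapse '' (Icc z u ∪ Icc u v)) := by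
          unfold hterm; rw [← hsplit]
      _ = (1/2:ℝ)^n * diam ((Φ.collapse '' Icc z u) ∪ (Φ.collapse '' Icc u v)) := by
          rw [image_union]
      _ ≤ (1/2:ℝ)^n * (diam (Φ.collapse '' Icc z u) + 0 + diam (Φ.collapse '' Icc u v)) :=
          mul_le_mul_of_nonneg_left hd (by positivity)
      _ = Φ.hterm e n u + (1/2:ℝ)^n * diam (Φ.collapse '' Icc u v) := by
          unfold hterm; ring
  · have hu0 : Φ.hterm e n u = 0 := by
      unfold hterm
      rw [Icc_eq_empty (not_le.2 huz), image_empty, diam_empty, mul_zero]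
    rcases le_or_gt z v with hzv | hvz
    · have : Φ.hterm e n v ≤ (1/2:ℝ)^n * diam (Φ.collapse '' Icc u v) :=
        mul_le_mul_of_nonneg_left
          (diam_mono (image_mono (Icc_subset_Icc huz.le le_rfl))
            (Φ.collapse_image_bounded hb _)) (by positivity)
      rw [hu0]; linarith
    · have hv0 : Φ.hterm e n v = 0 := by
        unfold hterm
        rw [Icc_eq_empty (not_le.2 hvz), image_empty, diam_empty, mul_zero]
      rw [hu0, hv0, zero_add]
      positivity

theorem hfun_le_add (hb : Bornology.IsBounded (range F)) {u v : ℝ} (huv : u ≤ v) :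
    Φ.hfun e v ≤ Φ.hfun e u + 2 * diam (Φ.collapse '' Icc u v) := by
  have h1 : Φ.hfun e v ≤ ∑' n, (Φ.hterm e n u + (1/2:ℝ)^n * diam (Φ.collapse '' Icc u v)) := by
    refine Summable.tsum_le_tsum (fun n => Φ.hterm_le_add hb n huv) (Φ.hterm_summable hb v) ?_
    exact (Φ.hterm_summable hb u).add ((summable_geometric_two.mul_right _))
  rw [Summable.tsum_add (Φ.hterm_summable hb u) (summable_geometric_two.mul_right _)] at h1
  rw [tsum_mul_right, tsum_geometric_two] at h1
  exact h1.trans (le_of_eq (by unfold hfun; ring))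

theorem hfun_uniformContinuous (hF : UniformContinuous F) (hb : Bornology.IsBounded (range F)) :
    UniformContinuous (Φ.hfun e) := by
  rw [Metric.uniformContinuous_iff]
  intro ε hε
  obtain ⟨δ, hδ0, hδ⟩ := Metric.uniformContinuous_iff.1 (Φ.collapse_uniformContinuous hF)
    (ε/8) (by linarith)
  refine ⟨δ, hδ0, ?_⟩
  suffices H : ∀ a b : ℝ, a ≤ b → dist a b < δ → dist (Φ.hfun e a) (Φ.hfun e b) < ε by
    intro a b hab
    rcases le_total a b with h | h
    · exact H a b h hab
    · rw [dist_comm]; exact H b a h (by rwa [dist_comm])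
  intro a b hab hd
  have hC : diam (Φ.collapse '' Icc a b) ≤ ε/8 := by
    apply diam_le_of_forall_dist_le (by linarith)
    rintro _ ⟨w, hw, rfl⟩ _ ⟨w', hw', rfl⟩
    refine (hδ ?_).le
    rw [Real.dist_eq] at hd ⊢
    rw [abs_of_nonpos (by linarith : a - b ≤ 0)] at hd
    have : |w - w'| ≤ b - a := abs_sub_le_iff.2
      ⟨by linarith [hw.1, hw.2, hw'.1, hw'.2], by linarith [hw.1, hw.2, hw'.1, hw'.2]⟩
    linarith
  have h1 := Φ.hfun_le_add hb (e := e) hab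
  have h2 := Φ.hfun_mono hb (e := e) hab
  rw [Real.dist_eq, abs_of_nonpos (by linarith : Φ.hfun e a - Φ.hfun e b ≤ 0)]
  linarith

theorem hfun_eq_of_const (hb : Bornology.IsBounded (range F)) {u v : ℝ} (huv : u ≤ v)
    (hc : ∀ w ∈ Icc u v, Φ.collapse w = Φ.collapse u) : Φ.hfun e u = Φ.hfun e v := by
  unfold hfun
  refine tsum_congr (fun n => ?_)
  set z := ((e n : ℚ) : ℝ) with hz
  rcases le_or_gt z u with hzu | huz
  · have himg : Φ.collapse '' Icc z u = Φ.collapse '' Icc z v := by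
      apply Subset.antisymm
      · exact image_mono (Icc_subset_Icc_right huv)
      · rintro _ ⟨w', hw', rfl⟩
        rcases le_or_gt w' u with h | h
        · exact mem_image_of_mem _ ⟨hw'.1, h⟩
        · rw [hc w' ⟨h.le, hw'.2⟩]
          exact mem_image_of_mem _ ⟨hzu, le_rfl⟩
    unfold hterm
    rw [himg]
  · rcases le_or_gt z v with hzv | hvz
    · have hsub : (Φ.collapse '' Icc z v).Subsingleton := by
        rintro _ ⟨w₁, hw₁, rfl⟩ _ ⟨w₂, hw₂, rfl⟩
        rw [hc w₁ ⟨huz.le.trans hw₁.1, hw₁.2⟩, hc w₂ ⟨huz.le.trans hw₂.1, hw₂.2⟩]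
      unfold hterm
      rw [Icc_eq_empty (not_le.2 huz), image_empty, diam_empty, diam_subsingleton hsub]
    · unfold hterm
      rw [Icc_eq_empty (not_le.2 huz), Icc_eq_empty (not_le.2 hvz)]

theorem hfun_lt (hF : UniformContinuous F) (hb : Bornology.IsBounded (range F))
    (he : Function.Surjective e) {u v w : ℝ} (huv : u ≤ v) (hw : w ∈ Icc u v)
    (hne : Φ.collapse w ≠ Φ.collapse u) : Φ.hfun e u < Φ.hfun e v := by
  have huw : u < w := lt_of_le_of_ne hw.1 (fun h => hne (by rw [← h]))
  set d := dist (Φ.collapse w) (Φ.collapse u) with hd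
  have hd0 : 0 < d := dist_pos.2 hne
  obtain ⟨δ, hδ0, hδ⟩ := Metric.uniformContinuous_iff.1 (Φ.collapse_uniformContinuous hF)
    (d/2) (by linarith)
  have hlt : u < min (u + δ) w := lt_min (lt_add_of_pos_right u hδ0) huw
  obtain ⟨q, hq1, hq2⟩ := exists_rat_btwn hlt
  obtain ⟨n, hn⟩ := he q
  have hzq : ((e n : ℚ) : ℝ) = (q : ℝ) := by rw [hn]
  set z := ((e n : ℚ) : ℝ) with hzdef
  have hz1 : u < z := by rw [hzq]; exact hq1
  have hz2 : z < u + δ := by rw [hzq]; exact hq2.trans_le (min_le_left _ _)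
  have hz3 : z < w := by rw [hzq]; exact hq2.trans_le (min_le_right _ _)
  have hterm_u : Φ.hterm e n u = 0 := by
    unfold hterm
    rw [Icc_eq_empty (not_le.2 hz1), image_empty, diam_empty, mul_zero]
  have hdzu : dist (Φ.collapse z) (Φ.collapse u) < d/2 := by
    apply hδ
    rw [Real.dist_eq, abs_of_nonneg (by linarith)]
    linarith
  have hdzw : d/2 ≤ dist (Φ.collapse z) (Φ.collapse w) := by
    have htri := dist_triangle (Φ.collapse w) (Φ.collapse z) (Φ.collapse u)
    rw [dist_comm (Φ.collapse w) (Φ.collapse z)] at htri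
    linarith [htri]
  have hterm_v : (1/2:ℝ)^n * (d/2) ≤ Φ.hterm e n v := by
    unfold hterm
    apply mul_le_mul_of_nonneg_left _ (by positivity : (0:ℝ) ≤ (1/2:ℝ)^n)
    refine hdzw.trans (dist_le_diam_of_mem (Φ.collapse_image_bounded hb _) ?_ ?_)
    · exact mem_image_of_mem _ ⟨le_rfl, hz3.le.trans hw.2⟩
    · exact mem_image_of_mem _ ⟨hz3.le, hw.2⟩
  refine Summable.tsum_lt_tsum (i := n) (fun m => Φ.hterm_mono hb m huv) ?_
    (Φ.hterm_summable hb u) (Φ.hterm_summable hb v)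
  rw [hterm_u]
  exact lt_of_lt_of_le (by positivity) hterm_v

end Hfun

end MaxFam

/-- Arc extraction: every path in a metric space between distinct points contains
an injective path with range inside the original range. -/
theorem exists_injective_path {X : Type*} [MetricSpace X] {x y : X} (hxy : x ≠ y)
    (γ : Path x y) :
    ∃ g : Path x y, Function.Injective ⇑g ∧ range ⇑g ⊆ range ⇑γ := by
  classical
  set F : ℝ → X := fun r => γ (Set.projIcc 0 1 zero_le_one r) with hFdef
  have hF : UniformContinuous F :=
    (CompactSpace.uniformContinuous_of_continuous γ.continuous).comp
      (LipschitzWith.projIcc zero_le_one).uniformContinuous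
  have hF0 : F 0 = x := by
    show γ (Set.projIcc 0 1 zero_le_one 0) = x
    rw [Set.projIcc_left]
    exact γ.source
  have hF1 : F 1 = y := by
    show γ (Set.projIcc 0 1 zero_le_one 1) = y
    rw [Set.projIcc_right]
    exact γ.target
  have hFrange : range F ⊆ range ⇑γ := fun z ⟨r, hr⟩ => ⟨_, hr⟩
  have hbF : Bornology.IsBounded (range F) :=
    ((isCompact_range γ.continuous).isBounded).subset hFrange
  obtain ⟨M, hfam, hmax⟩ := exists_maximal_fam F hF
  set Φ : MaxFam F := ⟨M, hfam, hmax⟩ with hΦ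
  obtain ⟨e, he⟩ := exists_surjective_nat ℚ
  have hcol0 : Φ.collapse 0 = x := Φ.collapse_zero.trans hF0
  have hcol1 : Φ.collapse 1 = y := Φ.collapse_one.trans hF1
  have h01 : Φ.hfun e 0 < Φ.hfun e 1 := by
    refine Φ.hfun_lt hF hbF he zero_le_one ⟨zero_le_one, le_rfl⟩ ?_
    rw [hcol0, hcol1]
    exact fun h => hxy h.symm
  have hden : 0 < Φ.hfun e 1 - Φ.hfun e 0 := by linarith
  set m' : ℝ → ℝ := fun u => (Φ.hfun e u - Φ.hfun e 0) / (Φ.hfun e 1 - Φ.hfun e 0) with hm'def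
  have hm'cont : Continuous m' :=
    (((Φ.hfun_uniformContinuous hF hbF).continuous).sub continuous_const).div_const _
  have hm'mono : Monotone m' := by
    intro a b hab
    have h := Φ.hfun_mono (e := e) hbF hab
    exact (div_le_div_iff_of_pos_right hden).2 (by linarith)
  have hm'0 : m' 0 = 0 := by
    rw [hm'def]
    simp
  have hm'1 : m' 1 = 1 := by
    rw [hm'def]
    exact div_self hden.ne'
  have hm'eq : ∀ {a b : ℝ}, m' a = m' b → Φ.hfun e a = Φ.hfun e b := by
    intro a b hab
    rw [hm'def, div_eq_div_iff hden.ne' hden.ne'] at hab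
    have := mul_right_cancel₀ hden.ne' hab
    linarith
  have hm'mem : ∀ u ∈ Icc (0:ℝ) 1, m' u ∈ Icc (0:ℝ) 1 := by
    intro u hu
    constructor
    · rw [← hm'0]; exact hm'mono hu.1
    · rw [← hm'1]; exact hm'mono hu.2
  have hIVT : ∀ ξ ∈ Icc (0:ℝ) 1, ∃ u ∈ Icc (0:ℝ) 1, m' u = ξ := by
    intro ξ hξ
    have hmem : ξ ∈ Icc (m' 0) (m' 1) := by rw [hm'0, hm'1]; exact hξ
    obtain ⟨u, hu, hu2⟩ := intermediate_value_Icc zero_le_one hm'cont.continuousOn hmem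
    exact ⟨u, hu, hu2⟩
  set A : ℝ → Set ℝ := fun ξ => {u | u ∈ Icc (0:ℝ) 1 ∧ m' u ≤ ξ} with hAdef
  set sfun : ℝ → ℝ := fun ξ => sSup (A ξ) with hsdef
  have hA0 : ∀ ξ : ℝ, 0 ≤ ξ → 0 ∈ A ξ := by
    intro ξ hξ
    exact ⟨⟨le_rfl, zero_le_one⟩, by rw [hm'0]; exact hξ⟩
  have hAbdd : ∀ ξ : ℝ, BddAbove (A ξ) := by
    intro ξ
    exact (bddAbove_Icc (a := (0:ℝ)) (b := 1)).mono (fun z hz => hz.1)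
  have hs_mem : ∀ ξ ∈ Icc (0:ℝ) 1, sfun ξ ∈ Icc (0:ℝ) 1 := by
    intro ξ hξ
    constructor
    · exact le_csSup (hAbdd ξ) (hA0 ξ hξ.1)
    · exact csSup_le ⟨0, hA0 ξ hξ.1⟩ (fun z hz => hz.1.2)
  have hms : ∀ ξ ∈ Icc (0:ℝ) 1, m' (sfun ξ) = ξ := by
    intro ξ hξ
    apply le_antisymm
    · have h1 : sfun ξ ∈ closure (A ξ) := csSup_mem_closure ⟨0, hA0 ξ hξ.1⟩ (hAbdd ξ)
      have h2 : closure (A ξ) ⊆ {u | m' u ≤ ξ} :=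
        closure_minimal (fun z hz => hz.2) (isClosed_le hm'cont continuous_const)
      exact h2 h1
    · obtain ⟨u, hu, hu2⟩ := hIVT ξ hξ
      have h3 : u ≤ sfun ξ := le_csSup (hAbdd ξ) ⟨hu, hu2.le⟩
      have h4 := hm'mono h3
      rw [hu2] at h4
      exact h4
  have hcol_s : ∀ u ∈ Icc (0:ℝ) 1, Φ.collapse (sfun (m' u)) = Φ.collapse u := by
    intro u hu
    have hmu : m' u ∈ Icc (0:ℝ) 1 := hm'mem u hu
    have hus : u ≤ sfun (m' u) := le_csSup (hAbdd _) ⟨hu, le_rfl⟩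
    have hmeq : m' (sfun (m' u)) = m' u := hms _ hmu
    have hheq : Φ.hfun e u = Φ.hfun e (sfun (m' u)) := hm'eq hmeq.symm
    by_contra hne'
    exact absurd hheq (ne_of_lt (Φ.hfun_lt hF hbF he hus ⟨hus, le_rfl⟩ hne'))
  set G : unitInterval → X := fun ξ => Φ.collapse (sfun ξ.1) with hGdef
  set m'' : unitInterval → unitInterval := fun u => ⟨m' u.1, hm'mem u.1 u.2⟩ with hm''def
  have hm''cont : Continuous m'' :=
    Continuous.subtype_mk (hm'cont.comp continuous_subtype_val) _
  have hm''surj : Function.Surjective m'' := by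
    intro ξ
    obtain ⟨u, hu, hu2⟩ := hIVT ξ.1 ξ.2
    exact ⟨⟨u, hu⟩, Subtype.ext hu2⟩
  have hGm : ∀ u : unitInterval, G (m'' u) = Φ.collapse u.1 := fun u => hcol_s u.1 u.2
  have hGcont : Continuous G := by
    have hq : Topology.IsQuotientMap m'' := (hm''cont.isClosedMap).isQuotientMap hm''cont hm''surj
    rw [hq.continuous_iff]
    have hfe : (G ∘ m'') = fun u : unitInterval => Φ.collapse u.1 := funext hGm
    rw [hfe]
    exact (Φ.collapse_continuous hF).comp continuous_subtype_val
  have hGinj : Function.Injective G := by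
    have key : ∀ ξ₁ ξ₂ : unitInterval, sfun ξ₁.1 ≤ sfun ξ₂.1 → G ξ₁ = G ξ₂ → ξ₁ = ξ₂ := by
      intro ξ₁ ξ₂ hle hG
      have hs₁ : sfun ξ₁.1 ∈ Icc (0:ℝ) 1 := hs_mem _ ξ₁.2
      have hs₂ : sfun ξ₂.1 ∈ Icc (0:ℝ) 1 := hs_mem _ ξ₂.2
      have hconst := Φ.collapse_eq_imp_const hs₁ hs₂ hle hG
      have hhe : Φ.hfun e (sfun ξ₁.1) = Φ.hfun e (sfun ξ₂.1) :=
        Φ.hfun_eq_of_const hbF hle hconst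
      have hmm : m' (sfun ξ₁.1) = m' (sfun ξ₂.1) := by
        rw [hm'def]
        simp only [hhe]
      rw [hms _ ξ₁.2, hms _ ξ₂.2] at hmm
      exact Subtype.ext hmm
    intro ξ₁ ξ₂ hG
    rcases le_total (sfun ξ₁.1) (sfun ξ₂.1) with h | h
    · exact key ξ₁ ξ₂ h hG
    · exact (key ξ₂ ξ₁ h hG.symm).symm
  have hcoe0 : ((0 : unitInterval) : ℝ) = 0 := rfl
  have hcoe1 : ((1 : unitInterval) : ℝ) = 1 := rfl
  have hG0 : G 0 = x := by
    have h0I : (0:ℝ) ∈ Icc (0:ℝ) 1 := ⟨le_rfl, zero_le_one⟩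
    have := hcol_s 0 h0I
    rw [hm'0] at this
    show Φ.collapse (sfun ((0 : unitInterval) : ℝ)) = x
    rw [hcoe0, this, hcol0]
  have hG1 : G 1 = y := by
    have h1I : (1:ℝ) ∈ Icc (0:ℝ) 1 := ⟨zero_le_one, le_rfl⟩
    have := hcol_s 1 h1I
    rw [hm'1] at this
    show Φ.collapse (sfun ((1 : unitInterval) : ℝ)) = y
    rw [hcoe1, this, hcol1]
  refine ⟨{ toFun := G, continuous_toFun := hGcont, source' := hG0, target' := hG1 },
    hGinj, ?_⟩
  rintro _ ⟨ξ, rfl⟩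
  exact hFrange ⟨Φ.sig (sfun ξ.1), rfl⟩

/-- The initial segment of a path up to time `t₁`, as a path to `p t₁`. -/
def initSeg {S : Type*} [TopologicalSpace S] {s t : S} (p : Path s t) (t₁ : unitInterval) :
    Path s (p t₁) where
  toFun a := p ⟨(a : ℝ) * (t₁ : ℝ), unitInterval.mul_mem a.2 t₁.2⟩
  continuous_toFun := p.continuous.comp (Continuous.subtype_mk
    (continuous_subtype_val.mul continuous_const) _)
  source' := by
    have h0 : (⟨((0:unitInterval) : ℝ) * (t₁ : ℝ),
        unitInterval.mul_mem (0:unitInterval).2 t₁.2⟩ : unitInterval) = 0 := by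
      ext
      norm_num
    show p ⟨((0:unitInterval) : ℝ) * (t₁ : ℝ),
        unitInterval.mul_mem (0:unitInterval).2 t₁.2⟩ = s
    rw [h0, p.source]
  target' := by
    have h1 : (⟨((1:unitInterval) : ℝ) * (t₁ : ℝ),
        unitInterval.mul_mem (1:unitInterval).2 t₁.2⟩ : unitInterval) = t₁ := by
      ext
      norm_num
    show p ⟨((1:unitInterval) : ℝ) * (t₁ : ℝ),
        unitInterval.mul_mem (1:unitInterval).2 t₁.2⟩ = p t₁
    rw [h1]

end CutPointProofAux

open CutPointProofAux

/-- A subspace `T` of a metric space `S` is strongly convex if every simple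
(injective) path in `S` starting and ending in `T` is entirely contained in `T`. -/
def StronglyConvex {S : Type*} [MetricSpace S] (T : Set S) : Prop :=
  ∀ (u v : S) (q : Path u v), Function.Injective ⇑q → u ∈ T → v ∈ T → ∀ a, q a ∈ T

/-- `c` is a cut point of `S`: two points of `S \ {c}` cannot be joined by a path
avoiding `c`. -/
def IsCutPoint {S : Type*} [MetricSpace S] (c : S) : Prop :=
  ∃ u v : S, u ≠ c ∧ v ≠ c ∧ ¬ ∃ q : Path u v, ∀ a, q a ≠ c

/-- a path connected metric space containing a proper closed strongly
convex subspace with at least two points has a cut point; specifically, for a simple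
path `p` from `s ∉ T` to `t ∈ T`, the first point `p t₁` of `p` in `T` is a cut point. -/
theorem cut_point_of_strongly_convex {S : Type*} [MetricSpace S] [PathConnectedSpace S]
    (T : Set S) (hclosed : IsClosed T) (hproper : T ≠ Set.univ)
    (htwo : ∃ t₁ t₂ : S, t₁ ∈ T ∧ t₂ ∈ T ∧ t₁ ≠ t₂)
    (hconv : StronglyConvex T)
    (s t : S) (hs : s ∉ T) (ht : t ∈ T) (p : Path s t) (hinj : Function.Injective ⇑p)
    (t₁ : unitInterval) (ht₁ : p t₁ ∈ T ∧ ∀ a : unitInterval, p a ∈ T → t₁ ≤ a) :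
    IsCutPoint (p t₁) ∧ ∃ c : S, IsCutPoint c := by
  classical
  obtain ⟨hct, hmin⟩ := ht₁
  set c := p t₁ with hcdef
  obtain ⟨w₁, w₂, hw₁, hw₂, hww⟩ := htwo
  obtain ⟨v, hvT, hvc⟩ : ∃ v, v ∈ T ∧ v ≠ c := by
    by_cases h : w₁ = c
    · exact ⟨w₂, hw₂, fun hh => hww (by rw [h, hh])⟩
    · exact ⟨w₁, hw₁, h⟩
  have hsc : s ≠ c := fun h => hs (h ▸ hct)
  suffices hcut : IsCutPoint c by exact ⟨hcut, c, hcut⟩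
  refine ⟨s, v, hsc, hvc, ?_⟩
  rintro ⟨q, hq⟩
  set p₀ : Path s c := initSeg p t₁ with hp₀
  have hp₀T : ∀ b : unitInterval, p₀ b ∈ T → p₀ b = c := by
    intro b hbT
    have hle : t₁ ≤ ⟨(b : ℝ) * (t₁ : ℝ), unitInterval.mul_mem b.2 t₁.2⟩ := hmin _ hbT
    have h2 : (t₁ : ℝ) ≤ (b : ℝ) * (t₁ : ℝ) := Subtype.coe_le_coe.2 hle
    have h1 : (b : ℝ) * (t₁ : ℝ) ≤ (t₁ : ℝ) := mul_le_of_le_one_left t₁.2.1 b.2.2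
    have heq : (⟨(b : ℝ) * (t₁ : ℝ), unitInterval.mul_mem b.2 t₁.2⟩ : unitInterval) = t₁ :=
      Subtype.ext (le_antisymm h1 h2)
    show p _ = c
    rw [heq]
  have hcv : c ≠ v := fun h => hvc h.symm
  set R : Path c v := p₀.symm.trans q with hR
  obtain ⟨δ, hδinj, hδrange⟩ := exists_injective_path hcv R
  have hδT : ∀ a, δ a ∈ T := hconv c v δ hδinj hct hvT
  have hδq : ∀ a : unitInterval, a ≠ 0 → δ a ∈ Set.range ⇑q := by
    intro a ha
    have hmem : δ a ∈ Set.range ⇑R := hδrange ⟨a, rfl⟩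
    rw [hR, Path.trans_range, Path.symm_range] at hmem
    rcases hmem with hmem | hmem
    · exfalso
      obtain ⟨b, hb⟩ := hmem
      have h1 : δ a = c := by rw [← hb]; exact hp₀T b (hb ▸ hδT a)
      have h2 : δ a = δ 0 := by rw [h1, δ.source]
      exact ha (hδinj h2)
    · exact hmem
  have hcc : c ∈ closure (Set.range ⇑q) := by
    rw [Metric.mem_closure_iff]
    intro ε hε
    obtain ⟨η, hη0, hη⟩ := Metric.continuous_iff.1 δ.continuous 0 ε hε
    have hapos : (0:ℝ) < min (η/2) (1/2) := lt_min (by linarith) (by norm_num)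
    set a : unitInterval := ⟨min (η/2) (1/2),
      ⟨hapos.le, (min_le_right _ _).trans (by norm_num)⟩⟩ with hadef
    have hane : a ≠ 0 := by
      intro h
      exact hapos.ne' (Set.Icc.coe_eq_zero.mpr h)
    have hdist : dist a (0 : unitInterval) < η := by
      rw [Subtype.dist_eq]
      show |min (η/2) (1/2) - (0:ℝ)| < η
      rw [sub_zero, abs_of_pos hapos]
      exact (min_le_left _ _).trans_lt (by linarith)
    refine ⟨δ a, hδq a hane, ?_⟩
    have := hη a hdist
    rw [δ.source] at this
    rw [dist_comm]
    exact this
  have hcr : c ∈ Set.range ⇑q := by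
    have hclosed' : IsClosed (Set.range ⇑q) := (isCompact_range q.continuous).isClosed
    rwa [hclosed'.closure_eq] at hcc
  obtain ⟨a, ha⟩ := hcr
  exact hq a ha
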